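/- Let 1 ≤ l ≤ n−1 and, for I ⊆ [1, n−1], set α(I) = c_{I ∩ [1,l−1]} · c_{[l,n−1] ∖ I} · σ_{[l,n]} · a_l. Then ℓ(t α(I)) > ℓ(α(I)) if and only if [1, l−1] is properly contained in I. Equivalently, α(I)^{−1}(1) > 0 if and only if [1, l−1] ⊊ I. -/

import Mathlib

/-!
Common setup: the Weyl group `W n` of type `B_n`, realized as the group of
permutations `w` of `I_n = {±1, …, ±n}` (inside `Equiv.Perm ℤ`, fixing every
integer of absolute value `> n`) such that `w (-i) = - w i` for all `i`.
-/

namespace TypeB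

/-- The generator `t = (1, -1)`. -/
def t : Equiv.Perm ℤ := Equiv.swap 1 (-1)

/-- The generator `s i = (i, i+1)(-i, -(i+1))` (meaningful for `1 ≤ i`). -/
def s (i : ℕ) : Equiv.Perm ℤ :=
  Equiv.swap (i : ℤ) ((i : ℤ) + 1) * Equiv.swap (-(i : ℤ)) (-((i : ℤ) + 1))

/-- The generating set `S_n = {t, s_1, …, s_{n-1}}`. -/
def gens (n : ℕ) : Set (Equiv.Perm ℤ) :=
  {t} ∪ {x | ∃ i : ℕ, 1 ≤ i ∧ i < n ∧ x = s i}

/-- The Weyl group `W_n` of type `B_n`, as a subgroup of `Equiv.Perm ℤ`: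
permutations `w` with `w (-i) = - (w i)` for all `i` and fixing all `i` with `|i| > n`. -/
def W (n : ℕ) : Subgroup (Equiv.Perm ℤ) where
  carrier := {w | (∀ i : ℤ, w (-i) = - w i) ∧ ∀ i : ℤ, (n : ℤ) < |i| → w i = i}
  one_mem' := ⟨fun _ => rfl, fun _ _ => rfl⟩
  mul_mem' := by
    rintro u v ⟨hu1, hu2⟩ ⟨hv1, hv2⟩
    refine ⟨fun i => ?_, fun i hi => ?_⟩
    · simp only [Equiv.Perm.mul_apply, hv1, hu1]
    · simp only [Equiv.Perm.mul_apply, hv2 i hi, hu2 i hi]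
  inv_mem' := by
    rintro u ⟨hu1, hu2⟩
    refine ⟨fun i => ?_, fun i hi => ?_⟩
    · apply u.injective
      simp [hu1]
    · apply u.injective
      simp [hu2 i hi]

/-- The length of `w` with respect to the generating set `S_n`. -/
noncomputable def len (n : ℕ) (w : Equiv.Perm ℤ) : ℕ :=
  sInf {k | ∃ l : List (Equiv.Perm ℤ), (∀ x ∈ l, x ∈ gens n) ∧ l.prod = w ∧ l.length = k}

/-- `l` is a reduced expression for `w` with respect to `S_n`. -/
def IsReduced (n : ℕ) (w : Equiv.Perm ℤ) (l : List (Equiv.Perm ℤ)) : Prop :=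
  (∀ x ∈ l, x ∈ gens n) ∧ l.prod = w ∧ l.length = len n w

/-- `ℓ_t w`: the number of occurrences of `t` in a reduced expression of `w`
(independent of the chosen reduced expression). -/
noncomputable def lent (n : ℕ) (w : Equiv.Perm ℤ) : ℕ :=
  letI : DecidableEq (Equiv.Perm ℤ) := Classical.decEq _
  sInf {m | ∃ l, IsReduced n w l ∧ l.count t = m}

/-- `r 1 = t` and `r (i+1) = s i * r i`. -/
def r : ℕ → Equiv.Perm ℤ
  | 0 => 1
  | 1 => t
  | (i + 2) => s (i + 1) * r (i + 1)

/-- `t_1 = t` and `t_{i+1} = s_i * t_i * s_i`. -/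
def tperm : ℕ → Equiv.Perm ℤ
  | 0 => 1
  | 1 => t
  | (i + 2) => s (i + 1) * tperm (i + 1) * s (i + 1)

/-- `a l = r 1 * r 2 * ⋯ * r l`, with `a 0 = 1`. -/
def a : ℕ → Equiv.Perm ℤ
  | 0 => 1
  | (l + 1) => a l * r (l + 1)

/-- The symmetric group `𝔖_n`: the subgroup generated by `s_1, …, s_{n-1}`. -/
def Sym (n : ℕ) : Subgroup (Equiv.Perm ℤ) :=
  Subgroup.closure {x | ∃ i : ℕ, 1 ≤ i ∧ i < n ∧ x = s i}

/-- The parabolic subgroup `𝔖_{l,n-l}`: generated by `{s_1, …, s_{n-1}} \ {s_l}`. -/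
def SymP (n l : ℕ) : Subgroup (Equiv.Perm ℤ) :=
  Subgroup.closure {x | ∃ i : ℕ, 1 ≤ i ∧ i < n ∧ i ≠ l ∧ x = s i}

/-- `Y_{l,n-l}`: elements of `𝔖_n` of minimal length in their coset `w 𝔖_{l,n-l}`. -/
def Y (n l : ℕ) : Set (Equiv.Perm ℤ) :=
  {w | w ∈ Sym n ∧ ∀ u ∈ SymP n l, len n w ≤ len n (w * u)}

/-- The subgroup `𝔖_{[i,j]}` generated by `s_i, …, s_{j-1}`. -/
def SymI (i j : ℕ) : Subgroup (Equiv.Perm ℤ) :=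
  Subgroup.closure {x | ∃ k : ℕ, i ≤ k ∧ k < j ∧ x = s k}

/-- The function reversing the interval `[i,j]` (and `[-j,-i]`), for `1 ≤ i`. -/
def revFun (i j : ℤ) : ℤ → ℤ := fun k =>
  if 1 ≤ i ∧ i ≤ k ∧ k ≤ j then i + j - k
  else if 1 ≤ i ∧ -j ≤ k ∧ k ≤ -i then -(i + j) - k
  else k

lemma revFun_involutive (i j : ℤ) : Function.Involutive (revFun i j) := by
  intro k
  unfold revFun
  split_ifs <;> omega

/-- `σ_{[i,j]}`: the longest element of `𝔖_{[i,j]}`, i.e. the order-reversing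
permutation of the interval `[i,j]` (extended to `I_n` by `w(-k) = -w(k)`). -/
def sigmaI (i j : ℕ) : Equiv.Perm ℤ := (revFun_involutive (i : ℤ) (j : ℤ)).toPerm

/-- `σ_{l,n-l}`: the longest element of `𝔖_{l,n-l} = 𝔖_{[1,l]} × 𝔖_{[l+1,n]}`. -/
def sigmaLL (n l : ℕ) : Equiv.Perm ℤ := sigmaI 1 l * sigmaI (l + 1) n

/-- The function negating all `k` with `|k| ≤ n`. -/
def negnFun (n : ℤ) : ℤ → ℤ := fun k => if -n ≤ k ∧ k ≤ n then -k else k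

lemma negnFun_involutive (n : ℤ) : Function.Involutive (negnFun n) := by
  intro k
  unfold negnFun
  split_ifs <;> omega

/-- `w_n`: the longest element of `W_n`; as a permutation, `w_n i = -i` for `|i| ≤ n`. -/
def wlong (n : ℕ) : Equiv.Perm ℤ := (negnFun_involutive (n : ℤ)).toPerm

/-- `c_I = s_{i_1} s_{i_2} ⋯ s_{i_k}` for `I = {i_1 < i_2 < ⋯ < i_k}`. -/
def cElt (I : Finset ℕ) : Equiv.Perm ℤ := ((I.sort (· ≤ ·)).map s).prod

/-- `d_I = s_{i_k} ⋯ s_{i_2} s_{i_1}` for `I = {i_1 < i_2 < ⋯ < i_k}`. -/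
def dElt (I : Finset ℕ) : Equiv.Perm ℤ := (((I.sort (· ≤ ·)).map s).reverse).prod

/-- `X_n^{(m)}`: elements of `W_n` of minimal length in their coset `w W_m`. -/
def X (n m : ℕ) : Set (Equiv.Perm ℤ) :=
  {w | w ∈ W n ∧ ∀ u ∈ W m, len n w ≤ len n (w * u)}

/-- Bruhat order: `x ≤ y` iff some reduced expression of `y` contains a subword
which is a reduced expression of `x`. -/
def BruhatLE (n : ℕ) (x y : Equiv.Perm ℤ) : Prop :=
  ∃ ly, IsReduced n y ly ∧ ∃ lx, lx.Sublist ly ∧ IsReduced n x lx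

/-- Strict Bruhat order. -/
def BruhatLT (n : ℕ) (x y : Equiv.Perm ℤ) : Prop := BruhatLE n x y ∧ x ≠ y

/-- `D_i(W_n)`: the set of `x` such that exactly one of `s_i, s_{i+1}` is a
(right) descent of `x`. -/
def Dset (n i : ℕ) : Set (Equiv.Perm ℤ) :=
  {x | Xor' (len n (x * s i) < len n x) (len n (x * s (i + 1)) < len n x)}

open Classical in
/-- `γ_i x`: the unique element of `{x s_i, x s_{i+1}} ∩ D_i(W_n)` (for `x ∈ D_i(W_n)`). -/
noncomputable def gamma (n i : ℕ) (x : Equiv.Perm ℤ) : Equiv.Perm ℤ :=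
  if x * s i ∈ Dset n i then x * s i else x * s (i + 1)

/-- `E_m^{(r)}`: the set of `w ∈ W_m` such that `|w 1| > |w i|` for `2 ≤ i ≤ r+2`
and `(w 2, …, w (r+2))` is a shuffle of a positive decreasing sequence and a
negative increasing sequence. -/
def E (m ρ : ℕ) : Set (Equiv.Perm ℤ) :=
  {w | w ∈ W m ∧ (∀ i : ℕ, 2 ≤ i → i ≤ ρ + 2 → |w (i : ℤ)| < |w (1 : ℤ)|) ∧
    ∀ i j : ℕ, 2 ≤ i → i < j → j ≤ ρ + 2 →
      (0 < w (i : ℤ) → 0 < w (j : ℤ) → w (j : ℤ) < w (i : ℤ)) ∧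
      (w (i : ℤ) < 0 → w (j : ℤ) < 0 → w (i : ℤ) < w (j : ℤ))}

/-- The product `r_{i_1} ⋯ r_{i_l}` for a sequence `i : Fin l → ℕ`. -/
def prodR {l : ℕ} (i : Fin l → ℕ) : Equiv.Perm ℤ := (List.ofFn fun k => r (i k)).prod

/-- `(l, α, β, σ)` is a decomposition of `w` as in the decomposition lemma:
`l ≤ n`, `α, β ∈ Y_{l,n-l}`, `σ ∈ 𝔖_{l,n-l}` and `w = α a_l σ β⁻¹`. -/
def IsDecomp (n : ℕ) (w : Equiv.Perm ℤ) (l : ℕ) (α β σ : Equiv.Perm ℤ) : Prop :=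
  l ≤ n ∧ α ∈ Y n l ∧ β ∈ Y n l ∧ σ ∈ SymP n l ∧ w = α * a l * σ * β⁻¹



section Aux
set_option linter.unreachableTactic false
set_option linter.unusedTactic false
open Equiv

lemma t_app (x : ℤ) : t x = if x = 1 then -1 else if x = -1 then 1 else x := by
  rw [t, Equiv.swap_apply_def]

lemma s_app (i : ℕ) (hi : 1 ≤ i) (x : ℤ) :
    s i x = if x = (i:ℤ) then (i:ℤ)+1 else if x = (i:ℤ)+1 then (i:ℤ)
      else if x = -(i:ℤ) then -((i:ℤ)+1) else if x = -((i:ℤ)+1) then -(i:ℤ) else x := by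
  have hi' : (1:ℤ) ≤ (i:ℤ) := by exact_mod_cast hi
  simp only [s, Equiv.Perm.mul_apply, Equiv.swap_apply_def]
  split_ifs <;> first | omega | simp_all | (exfalso; omega)

lemma mem_W_iff {n : ℕ} {w : Equiv.Perm ℤ} :
    w ∈ W n ↔ (∀ i : ℤ, w (-i) = - w i) ∧ ∀ i : ℤ, (n : ℤ) < |i| → w i = i := Iff.rfl

lemma t_mem_W {n : ℕ} (hn : 1 ≤ n) : t ∈ W n := by
  have hn' : (1:ℤ) ≤ (n:ℤ) := by exact_mod_cast hn
  refine mem_W_iff.2 ⟨fun i => ?_, fun i hi => ?_⟩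
  · rw [t_app, t_app]; split_ifs <;> first | omega | simp_all | (exfalso; omega)
  · rw [lt_abs] at hi; rw [t_app]; split_ifs <;> first | omega | simp_all | (exfalso; omega)

lemma s_mem_W {n i : ℕ} (h1 : 1 ≤ i) (h2 : i < n) : s i ∈ W n := by
  have h1' : (1:ℤ) ≤ (i:ℤ) := by exact_mod_cast h1
  have h2' : (i:ℤ) < (n:ℤ) := by exact_mod_cast h2
  refine mem_W_iff.2 ⟨fun x => ?_, fun x hx => ?_⟩
  · rw [s_app i h1, s_app i h1]; split_ifs <;> first | omega | simp_all | (exfalso; omega)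
  · rw [lt_abs] at hx; rw [s_app i h1]; split_ifs <;> first | omega | simp_all | (exfalso; omega)

lemma gens_mem_W {n : ℕ} (hn : 1 ≤ n) {x : Equiv.Perm ℤ} (hx : x ∈ gens n) : x ∈ W n := by
  rcases hx with h | ⟨i, h1, h2, rfl⟩
  · rw [Set.mem_singleton_iff] at h; rw [h]; exact t_mem_W hn
  · exact s_mem_W h1 h2

lemma t_t : t * t = 1 := by
  ext x
  simp only [Equiv.Perm.mul_apply, Equiv.Perm.one_apply, t_app]
  split_ifs <;> first | omega | simp_all | (exfalso; omega)

lemma s_s (i : ℕ) (hi : 1 ≤ i) : s i * s i = 1 := by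
  have hi' : (1:ℤ) ≤ (i:ℤ) := by exact_mod_cast hi
  ext x
  simp only [Equiv.Perm.mul_apply, Equiv.Perm.one_apply, s_app i hi]
  split_ifs <;> first | omega | simp_all | (exfalso; omega)

lemma s_s_app (i : ℕ) (hi : 1 ≤ i) (x : ℤ) : s i (s i x) = x := by
  have := DFunLike.congr_fun (s_s i hi) x
  simpa [Equiv.Perm.mul_apply] using this

lemma gens_sq {n : ℕ} {x : Equiv.Perm ℤ} (hx : x ∈ gens n) : x * x = 1 := by
  rcases hx with h | ⟨i, h1, _, rfl⟩
  · rw [Set.mem_singleton_iff] at h; rw [h]; exact t_t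
  · exact s_s i h1

lemma w_zero {n : ℕ} {w : Equiv.Perm ℤ} (hw : w ∈ W n) : w 0 = 0 := by
  have h : w 0 = - w 0 := by simpa using hw.1 0
  linarith

lemma w_zero_iff {n : ℕ} {w : Equiv.Perm ℤ} (hw : w ∈ W n) (x : ℤ) : w x = 0 ↔ x = 0 := by
  constructor
  · intro h; have := w_zero hw; rw [← this] at h; exact w.injective h
  · rintro rfl; exact w_zero hw

lemma w_abs_le {n : ℕ} {w : Equiv.Perm ℤ} (hw : w ∈ W n) {x : ℤ} (hx : |x| ≤ n) :
    |w x| ≤ n := by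
  by_contra h
  push_neg at h
  have h2 := hw.2 (w x) h
  have := w.injective h2
  rw [this] at h
  omega

lemma w_inv_mem {n : ℕ} {w : Equiv.Perm ℤ} (hw : w ∈ W n) : w⁻¹ ∈ W n :=
  (W n).inv_mem hw

end Aux

section Len
set_option linter.unreachableTactic false
set_option linter.unusedTactic false

/-- The set of (encodings of) positive roots: pairs `(p,q)` with `|p| < q ≤ n`. -/
noncomputable def Pset (n : ℕ) : Finset (ℤ × ℤ) :=
  (Finset.Icc (-(n:ℤ)) (n:ℤ) ×ˢ Finset.Icc 1 (n:ℤ)).filter fun x => -x.2 < x.1 ∧ x.1 < x.2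

lemma mem_Pset {n : ℕ} {x : ℤ × ℤ} :
    x ∈ Pset n ↔ -(n:ℤ) ≤ x.1 ∧ x.1 ≤ n ∧ 1 ≤ x.2 ∧ x.2 ≤ n ∧ -x.2 < x.1 ∧ x.1 < x.2 := by
  simp only [Pset, Finset.mem_filter, Finset.mem_product, Finset.mem_Icc]
  tauto

/-- The length statistic: number of positive roots sent to negative roots. -/
noncomputable def LL (n : ℕ) (w : Equiv.Perm ℤ) : ℕ :=
  ((Pset n).filter fun x => w x.2 < w x.1).card

lemma LL_one (n : ℕ) : LL n 1 = 0 := by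
  classical
  rw [LL, Finset.card_eq_zero, Finset.filter_eq_empty_iff]
  intro x hx
  rw [mem_Pset] at hx
  simp only [Equiv.Perm.one_apply]
  omega

/-- Generic "exchange one root" lemma. -/
lemma LL_swap (n : ℕ) (u v : Equiv.Perm ℤ) (ρ : ℤ × ℤ) (τ : ℤ × ℤ → ℤ × ℤ)
    (hρ : ρ ∈ Pset n)
    (hmem : ∀ x ∈ Pset n, x ≠ ρ → τ x ∈ Pset n ∧ τ x ≠ ρ)
    (hinv : ∀ x ∈ Pset n, x ≠ ρ → τ (τ x) = x)
    (hcond : ∀ x ∈ Pset n, x ≠ ρ → (u x.2 < u x.1 ↔ v (τ x).2 < v (τ x).1))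
    (hflip : u ρ.2 < u ρ.1 ↔ ¬ v ρ.2 < v ρ.1) :
    (v ρ.2 < v ρ.1 → LL n u + 1 = LL n v) ∧ (¬ v ρ.2 < v ρ.1 → LL n u = LL n v + 1) := by
  classical
  have key : (((Pset n).erase ρ).filter fun x => u x.2 < u x.1).card
      = (((Pset n).erase ρ).filter fun x => v x.2 < v x.1).card := by
    refine Finset.card_bij' (fun x _ => τ x) (fun x _ => τ x) ?_ ?_ ?_ ?_
    · intro x hx
      rw [Finset.mem_filter, Finset.mem_erase] at hx ⊢
      obtain ⟨⟨hne, hP⟩, hc⟩ := hx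
      obtain ⟨h1, h2⟩ := hmem x hP hne
      exact ⟨⟨h2, h1⟩, ((hcond x hP hne).1 hc)⟩
    · intro x hx
      rw [Finset.mem_filter, Finset.mem_erase] at hx ⊢
      obtain ⟨⟨hne, hP⟩, hc⟩ := hx
      obtain ⟨h1, h2⟩ := hmem x hP hne
      refine ⟨⟨h2, h1⟩, ?_⟩
      rw [hcond (τ x) h1 h2, hinv x hP hne]
      exact hc
    · intro x hx
      rw [Finset.mem_filter, Finset.mem_erase] at hx
      exact hinv x hx.1.2 hx.1.1
    · intro x hx
      rw [Finset.mem_filter, Finset.mem_erase] at hx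
      exact hinv x hx.1.2 hx.1.1
  have e1 : ∀ w' : Equiv.Perm ℤ, ((Pset n).erase ρ).filter (fun x => w' x.2 < w' x.1)
      = ((Pset n).filter fun x => w' x.2 < w' x.1).erase ρ := fun w' =>
    Finset.filter_erase _ _ _
  rw [e1, e1] at key
  have hcard : ∀ (w' : Equiv.Perm ℤ), (w' ρ.2 < w' ρ.1) →
      (((Pset n).filter fun x => w' x.2 < w' x.1).erase ρ).card + 1
        = ((Pset n).filter fun x => w' x.2 < w' x.1).card := by
    intro w' hc
    have : ρ ∈ (Pset n).filter fun x => w' x.2 < w' x.1 := Finset.mem_filter.2 ⟨hρ, hc⟩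
    rw [Finset.card_erase_of_mem this]
    have := Finset.card_pos.2 ⟨ρ, this⟩
    omega
  have hcard' : ∀ (w' : Equiv.Perm ℤ), ¬(w' ρ.2 < w' ρ.1) →
      (((Pset n).filter fun x => w' x.2 < w' x.1).erase ρ)
        = ((Pset n).filter fun x => w' x.2 < w' x.1) := by
    intro w' hc
    apply Finset.erase_eq_of_notMem
    rw [Finset.mem_filter]
    tauto
  constructor
  · intro hv
    have hu : ¬ u ρ.2 < u ρ.1 := by rw [hflip]; tauto
    rw [LL, LL]
    rw [hcard' u hu] at key
    rw [key]
    exact hcard v hv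
  · intro hv
    have hu : u ρ.2 < u ρ.1 := hflip.2 hv
    rw [LL, LL]
    rw [hcard' v hv] at key
    rw [← key]
    exact (hcard u hu).symm

end Len

section Delta
set_option linter.unreachableTactic false
set_option linter.unusedTactic false

lemma prod_ne_iff {x : ℤ × ℤ} {a b : ℤ} : x ≠ (a, b) ↔ ¬(x.1 = a ∧ x.2 = b) := by
  rcases x with ⟨x1, x2⟩
  simp [Prod.ext_iff]

lemma t_t_app (x : ℤ) : t (t x) = x := by
  have := DFunLike.congr_fun t_t x
  simpa [Equiv.Perm.mul_apply] using this

lemma prod_ne_iff' {x : ℤ × ℤ} {a b : ℤ} : (¬ x = (a, b)) ↔ ¬(x.1 = a ∧ x.2 = b) :=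
  prod_ne_iff

lemma LL_t_right {n : ℕ} (hn : 1 ≤ n) {w : Equiv.Perm ℤ} (hw : w ∈ W n) :
    (w 1 < 0 → LL n (w * t) + 1 = LL n w) ∧ (0 < w 1 → LL n (w * t) = LL n w + 1) := by
  have hn' : (1:ℤ) ≤ (n:ℤ) := by exact_mod_cast hn
  have h0 := w_zero hw
  have key := LL_swap n (w * t) w ((0:ℤ), (1:ℤ)) (fun x => (t x.1, x.2))
    (by rw [mem_Pset]; dsimp only; omega)
    (by
      intro x hx hne
      rw [mem_Pset] at hx
      rw [prod_ne_iff] at hne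
      refine ⟨mem_Pset.2 ?_, prod_ne_iff.2 ?_⟩ <;> dsimp only <;>
        rw [t_app] <;> split_ifs <;> omega)
    (by
      intro x hx hne
      dsimp only
      rw [t_t_app])
    (by
      intro x hx hne
      rw [mem_Pset] at hx
      rw [prod_ne_iff] at hne
      dsimp only
      simp only [Equiv.Perm.mul_apply]
      have h2 : t x.2 = x.2 := by rw [t_app]; split_ifs <;> omega
      rw [h2])
    (by
      dsimp only
      simp only [Equiv.Perm.mul_apply]
      have h1 : t (1:ℤ) = -1 := by rw [t_app]; norm_num
      have h0' : t (0:ℤ) = 0 := by rw [t_app]; norm_num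
      rw [h1, h0', h0]
      have hne : w (-1) ≠ 0 := by intro hc; rw [w_zero_iff hw] at hc; omega
      have := hw.1 1
      constructor
      · intro h; omega
      · intro h; omega)
  dsimp only at key
  rw [h0] at key
  have hne : w 1 ≠ 0 := by intro hc; rw [w_zero_iff hw] at hc; omega
  exact ⟨fun h => key.1 h, fun h => key.2 (by omega)⟩

lemma LL_s_right {n i : ℕ} (h1 : 1 ≤ i) (h2 : i < n) {w : Equiv.Perm ℤ} (hw : w ∈ W n) :
    (w ((i:ℤ)+1) < w i → LL n (w * s i) + 1 = LL n w) ∧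
    (w i < w ((i:ℤ)+1) → LL n (w * s i) = LL n w + 1) := by
  have h1' : (1:ℤ) ≤ (i:ℤ) := by exact_mod_cast h1
  have h2' : (i:ℤ) < (n:ℤ) := by exact_mod_cast h2
  have sss := s_s_app i h1
  have sap := s_app i h1
  have hne : w (i:ℤ) ≠ w ((i:ℤ)+1) := by
    intro h
    have := w.injective h
    omega
  have key := LL_swap n (w * s i) w ((i:ℤ), (i:ℤ)+1)
    (fun x => if x = (-(i:ℤ), (i:ℤ)+1) then x else (s i x.1, s i x.2))
    (by rw [mem_Pset]; dsimp only; omega)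
    (by
      intro x hx hne
      rw [mem_Pset] at hx
      rw [prod_ne_iff] at hne
      by_cases hsp : x = (-(i:ℤ), (i:ℤ)+1)
      · rw [if_pos hsp]
        refine ⟨mem_Pset.2 hx, ?_⟩
        rw [hsp, prod_ne_iff]
        dsimp only
        omega
      · rw [if_neg hsp]
        rw [prod_ne_iff'] at hsp
        refine ⟨mem_Pset.2 ?_, prod_ne_iff.2 ?_⟩ <;> dsimp only <;>
          rw [sap x.1, sap x.2] <;> split_ifs <;> omega)
    (by
      intro x hx hne
      rw [mem_Pset] at hx
      rw [prod_ne_iff] at hne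
      by_cases hsp : x = (-(i:ℤ), (i:ℤ)+1)
      · rw [if_pos hsp, if_pos hsp]
      · rw [if_neg hsp]
        rw [prod_ne_iff'] at hsp
        have hne2 : ((s i x.1, s i x.2) : ℤ × ℤ) ≠ (-(i:ℤ), (i:ℤ)+1) := by
          rw [prod_ne_iff]
          dsimp only
          rw [sap x.1, sap x.2]
          split_ifs <;> omega
        rw [if_neg hne2]
        dsimp only
        rw [sss x.1, sss x.2])
    (by
      intro x hx hne
      rw [mem_Pset] at hx
      rw [prod_ne_iff] at hne
      by_cases hsp : x = (-(i:ℤ), (i:ℤ)+1)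
      · rw [if_pos hsp, hsp]
        dsimp only
        simp only [Equiv.Perm.mul_apply]
        have e1 : s i (-(i:ℤ)) = -((i:ℤ)+1) := by rw [sap]; split_ifs <;> omega
        have e2 : s i ((i:ℤ)+1) = (i:ℤ) := by rw [sap]; split_ifs <;> omega
        rw [e1, e2]
        have o1 : w (-((i:ℤ)+1)) = - w ((i:ℤ)+1) := hw.1 _
        have o2 : w (-(i:ℤ)) = - w (i:ℤ) := hw.1 _
        rw [o1, o2]
        omega
      · rw [if_neg hsp]
        dsimp only
        simp only [Equiv.Perm.mul_apply])
    (by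
      dsimp only
      simp only [Equiv.Perm.mul_apply]
      have e1 : s i ((i:ℤ)+1) = (i:ℤ) := by rw [sap]; split_ifs <;> omega
      have e2 : s i (i:ℤ) = (i:ℤ)+1 := by rw [sap]; split_ifs <;> omega
      rw [e1, e2]
      omega)
  dsimp only at key
  exact ⟨fun h => key.1 h, fun h => key.2 (by omega)⟩

lemma w_inv_odd {n : ℕ} {w : Equiv.Perm ℤ} (hw : w ∈ W n) (y : ℤ) : w⁻¹ (-y) = - w⁻¹ y :=
  (w_inv_mem hw).1 y

lemma LL_t_left {n : ℕ} (hn : 1 ≤ n) {w : Equiv.Perm ℤ} (hw : w ∈ W n) :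
    (w⁻¹ 1 < 0 → LL n (t * w) + 1 = LL n w) ∧ (0 < w⁻¹ 1 → LL n (t * w) = LL n w + 1) := by
  have hn' : (1:ℤ) ≤ (n:ℤ) := by exact_mod_cast hn
  obtain ⟨q₀, hq₀⟩ : ∃ q : ℤ, q = if 0 < w⁻¹ 1 then w⁻¹ 1 else -(w⁻¹ 1) := ⟨_, rfl⟩
  have hq0ne : w⁻¹ 1 ≠ 0 := by
    intro h
    have : (1:ℤ) = w 0 := by rw [← h]; simp
    rw [w_zero hw] at this
    omega
  have hq0pos : 0 < q₀ := by rw [hq₀]; split_ifs <;> omega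
  have hqabs : |w⁻¹ 1| ≤ (n:ℤ) := w_abs_le (w_inv_mem hw) (by simp; omega)
  have hqle : q₀ ≤ n := by
    rw [abs_le] at hqabs
    rw [hq₀]
    split_ifs <;> omega
  have hwq1 : 0 < w⁻¹ 1 → w q₀ = 1 := by
    intro h; rw [hq₀, if_pos h]; simp
  have hwq2 : w⁻¹ 1 < 0 → w q₀ = -1 := by
    intro h
    rw [hq₀, if_neg (by omega)]
    have : w⁻¹ (-1) = -(w⁻¹ 1) := w_inv_odd hw 1
    rw [← this]; simp
  have key := LL_swap n (t * w) w ((0:ℤ), q₀) id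
    (by rw [mem_Pset]; dsimp only; omega)
    (by intro x hx hne; exact ⟨hx, hne⟩)
    (by intro x hx hne; rfl)
    (by
      intro x hx hne
      rw [mem_Pset] at hx
      rw [prod_ne_iff] at hne
      simp only [Equiv.Perm.mul_apply, id_eq]
      have hab : w x.1 ≠ w x.2 := by
        intro h
        have := w.injective h
        omega
      have hbne0 : w x.2 ≠ 0 := by
        intro h
        rw [w_zero_iff hw] at h
        omega
      have hb1 : w x.2 = 1 → x.2 = q₀ := by
        intro h
        have h2 : x.2 = w⁻¹ 1 := by rw [← h]; simp
        rw [hq₀]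
        split_ifs <;> omega
      have hbm1 : w x.2 = -1 → x.2 = q₀ := by
        intro h
        have h2 : x.2 = w⁻¹ (-1) := by rw [← h]; simp
        rw [w_inv_odd hw] at h2
        rw [hq₀]
        split_ifs <;> omega
      have ha0 : w x.1 = 0 → x.1 = 0 := fun h => (w_zero_iff hw x.1).1 h
      have hsum : w x.1 ≠ -(w x.2) := by
        intro h
        have h2 : w x.1 = w (-x.2) := by rw [hw.1]; omega
        have := w.injective h2
        omega
      rw [t_app (w x.1), t_app (w x.2)]
      split_ifs <;> omega)
    (by
      simp only [Equiv.Perm.mul_apply]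
      try dsimp only
      rw [w_zero hw]
      have h0' : t (0:ℤ) = 0 := by rw [t_app]; norm_num
      rw [h0']
      rcases lt_trichotomy (w⁻¹ 1) 0 with h | h | h
      · rw [hwq2 h]
        rw [t_app]
        norm_num
      · omega
      · rw [hwq1 h]
        rw [t_app]
        norm_num)
  dsimp only at key
  rw [w_zero hw] at key
  constructor
  · intro h
    exact key.1 (by rw [hwq2 h]; omega)
  · intro h
    exact key.2 (by rw [hwq1 h]; omega)

end Delta

section LenEq
set_option linter.unreachableTactic false
set_option linter.unusedTactic false

lemma len_le {n : ℕ} {w : Equiv.Perm ℤ} {k : ℕ}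
    (h : ∃ l : List (Equiv.Perm ℤ), (∀ x ∈ l, x ∈ gens n) ∧ l.prod = w ∧ l.length = k) :
    len n w ≤ k :=
  Nat.sInf_le h

lemma LL_mul_le {n : ℕ} (hn : 1 ≤ n) {w g : Equiv.Perm ℤ} (hw : w ∈ W n) (hg : g ∈ gens n) :
    LL n (w * g) ≤ LL n w + 1 := by
  rcases hg with hgt | ⟨i, h1, h2, rfl⟩
  · rw [Set.mem_singleton_iff] at hgt
    subst hgt
    have key := LL_t_right hn hw
    have hne : w 1 ≠ 0 := by intro hc; rw [w_zero_iff hw] at hc; omega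
    rcases lt_or_gt_of_ne hne with h | h
    · have := key.1 h; omega
    · have := key.2 h; omega
  · have key := LL_s_right h1 h2 hw
    have hne : w (i:ℤ) ≠ w ((i:ℤ)+1) := by
      intro h
      have := w.injective h
      omega
    rcases lt_or_gt_of_ne hne with h | h
    · have := key.2 h; omega
    · have := key.1 h; omega

lemma LL_prod_le {n : ℕ} (hn : 1 ≤ n) (l : List (Equiv.Perm ℤ)) (hl : ∀ x ∈ l, x ∈ gens n) :
    l.prod ∈ W n ∧ LL n l.prod ≤ l.length := by
  induction l using List.reverseRecOn with
  | nil =>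
    simp only [List.prod_nil, List.length_nil]
    exact ⟨(W n).one_mem, by rw [LL_one]⟩
  | append_singleton l g ih =>
    have hl' : ∀ x ∈ l, x ∈ gens n := fun x hx => hl x (by simp [hx])
    have hg : g ∈ gens n := hl g (by simp)
    obtain ⟨hmem, hle⟩ := ih hl'
    rw [List.prod_append, List.prod_singleton, List.length_append, List.length_singleton]
    refine ⟨(W n).mul_mem hmem (gens_mem_W hn hg), ?_⟩
    have := LL_mul_le hn hmem hg
    omega

/-- If `w ∈ W n` is not `1` then it has a right descent. -/
lemma exists_descent {n : ℕ} {w : Equiv.Perm ℤ} (hw : w ∈ W n) (hw1 : w ≠ 1) :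
    (w 1 < 0 ∧ 1 ≤ n) ∨ (∃ i : ℕ, 1 ≤ i ∧ i < n ∧ w ((i:ℤ)+1) < w (i:ℤ)) := by
  by_contra hcon
  push_neg at hcon
  obtain ⟨h1, h2⟩ := hcon
  -- all values nonnegative at positive positions, and increasing
  have hinc : ∀ i : ℕ, 1 ≤ i → i < n → w (i:ℤ) < w ((i:ℤ)+1) := by
    intro i hi1 hi2
    have hne : w (i:ℤ) ≠ w ((i:ℤ)+1) := by
      intro h
      have := w.injective h
      omega
    have := h2 i hi1 hi2
    omega
  by_cases hn : 1 ≤ n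
  case neg =>
    have hn0 : n = 0 := by omega
    apply hw1
    ext x
    simp only [Equiv.Perm.one_apply]
    rcases eq_or_ne x 0 with rfl | hx0
    · exact w_zero hw
    · exact hw.2 x (by rw [hn0]; push_cast; exact abs_pos.mpr hx0)
  case pos =>
  have hw1pos : 0 < w 1 := by
    have hne : w 1 ≠ 0 := by intro hc; rw [w_zero_iff hw] at hc; omega
    by_cases hlt : w 1 < 0
    · have := h1 hlt; omega
    · omega
  -- w i ≥ i for 1 ≤ i ≤ n by induction
  have hge : ∀ i : ℕ, 1 ≤ i → i ≤ n → (i:ℤ) ≤ w (i:ℤ) := by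
    intro i
    induction i with
    | zero => omega
    | succ k ih =>
      intro _ hkn
      by_cases hk : 1 ≤ k
      · have hk2 : k ≤ n := by omega
        have := ih hk (by omega)
        have h3 := hinc k hk (by omega)
        push_cast
        push_cast at this h3
        omega
      · have : k = 0 := by omega
        subst this
        push_cast
        omega
  -- w i ≤ i for 1 ≤ i ≤ n by downward induction
  have hle : ∀ j : ℕ, j ≤ n → ∀ i : ℕ, 1 ≤ i → i = n - j → w (i:ℤ) ≤ (i:ℤ) := by
    intro j
    induction j with
    | zero =>
      intro _ i hi1 hi2
      have hin : i = n := by omega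
      subst hin
      have : |w (i:ℤ)| ≤ (i:ℤ) := by
        have := w_abs_le hw (x := (i:ℤ)) (by rw [abs_le]; constructor <;> push_cast <;> omega)
        rw [abs_le] at this
        rw [abs_le]
        constructor <;> omega
      rw [abs_le] at this
      omega
    | succ k ih =>
      intro hkn i hi1 hi2
      have hik : i + 1 = n - k := by omega
      have h4 := ih (by omega) (i+1) (by omega) (by omega)
      have h3 := hinc i hi1 (by omega)
      push_cast at h4
      omega
  -- so w = 1
  apply hw1
  ext x
  simp only [Equiv.Perm.one_apply]
  rcases lt_trichotomy x 0 with hx | hx | hx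
  · have hodd := hw.1 (-x)
    simp only [neg_neg] at hodd
    by_cases hxn : (n:ℤ) < -x
    · exact hw.2 x (by rw [lt_abs]; omega)
    · have hfix : w (-x) = -x := by
        have h1' : 1 ≤ -x := by omega
        obtain ⟨m, hm⟩ : ∃ m : ℕ, (m:ℤ) = -x := ⟨(-x).toNat, by omega⟩
        rw [← hm]
        have := hge m (by omega) (by omega)
        have := hle (n - m) (by omega) m (by omega) (by omega)
        omega
      rw [hfix] at hodd
      omega
  · subst hx; exact w_zero hw
  · by_cases hxn : (n:ℤ) < x
    · exact hw.2 x (by rw [lt_abs]; omega)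
    · obtain ⟨m, hm⟩ : ∃ m : ℕ, (m:ℤ) = x := ⟨x.toNat, by omega⟩
      rw [← hm]
      have := hge m (by omega) (by omega)
      have := hle (n - m) (by omega) m (by omega) (by omega)
      omega

end LenEq

section LenEq2
set_option linter.unreachableTactic false
set_option linter.unusedTactic false

lemma exists_word {n : ℕ} (hn : 1 ≤ n) :
    ∀ N : ℕ, ∀ w : Equiv.Perm ℤ, w ∈ W n → LL n w = N →
      ∃ l : List (Equiv.Perm ℤ), (∀ x ∈ l, x ∈ gens n) ∧ l.prod = w ∧ l.length = LL n w := by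
  intro N
  induction N using Nat.strong_induction_on with
  | _ N ih =>
    intro w hw hLL
    by_cases hw1 : w = 1
    · subst hw1
      exact ⟨[], by simp, by simp, by simp [LL_one]⟩
    · -- find a descent
      have hdesc : ∃ g, g ∈ gens n ∧ LL n (w * g) + 1 = LL n w ∧ g * g = 1 := by
        rcases exists_descent hw hw1 with ⟨h, _⟩ | ⟨i, h1, h2, h3⟩
        · exact ⟨t, Or.inl rfl, (LL_t_right hn hw).1 h, t_t⟩
        · exact ⟨s i, Or.inr ⟨i, h1, h2, rfl⟩, (LL_s_right h1 h2 hw).1 h3, s_s i h1⟩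
      obtain ⟨g, hg, hdec, hgg⟩ := hdesc
      have hwg : w * g ∈ W n := (W n).mul_mem hw (gens_mem_W hn hg)
      obtain ⟨l, hl1, hl2, hl3⟩ := ih (LL n (w * g)) (by omega) (w * g) hwg rfl
      refine ⟨l ++ [g], ?_, ?_, ?_⟩
      · intro x hx
        rcases List.mem_append.1 hx with hx | hx
        · exact hl1 x hx
        · rw [List.mem_singleton] at hx; subst hx; exact hg
      · rw [List.prod_append, List.prod_singleton, hl2, mul_assoc, hgg, mul_one]
      · rw [List.length_append, List.length_singleton, hl3]
        omega

lemma len_eq_LL {n : ℕ} (hn : 1 ≤ n) {w : Equiv.Perm ℤ} (hw : w ∈ W n) :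
    len n w = LL n w := by
  obtain ⟨l, hl1, hl2, hl3⟩ := exists_word hn (LL n w) w hw rfl
  have hub : len n w ≤ LL n w := len_le ⟨l, hl1, hl2, hl3⟩
  have hne : {k | ∃ l : List (Equiv.Perm ℤ),
      (∀ x ∈ l, x ∈ gens n) ∧ l.prod = w ∧ l.length = k}.Nonempty :=
    ⟨LL n w, l, hl1, hl2, hl3⟩
  obtain ⟨l', hl1', hl2', hl3'⟩ := Nat.sInf_mem hne
  have : LL n w ≤ len n w := by
    have := (LL_prod_le hn l' hl1').2
    rw [hl2'] at this
    rw [show len n w = sInf {k | ∃ l : List (Equiv.Perm ℤ),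
      (∀ x ∈ l, x ∈ gens n) ∧ l.prod = w ∧ l.length = k} from rfl, ← hl3']
    exact this
  omega

/-- The key bridge: `ℓ(tw) > ℓ(w)` iff `w⁻¹(1) > 0`. -/
lemma len_t_mul {n : ℕ} (hn : 1 ≤ n) {w : Equiv.Perm ℤ} (hw : w ∈ W n) :
    len n w < len n (t * w) ↔ 0 < w⁻¹ 1 := by
  have htw : t * w ∈ W n := (W n).mul_mem (t_mem_W hn) hw
  rw [len_eq_LL hn hw, len_eq_LL hn htw]
  have key := LL_t_left hn hw
  have hne : w⁻¹ 1 ≠ 0 := by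
    intro h
    have : (1:ℤ) = w 0 := by rw [← h]; simp
    rw [w_zero hw] at this
    omega
  constructor
  · intro h
    by_contra hpos
    have := key.1 (by omega)
    omega
  · intro h
    have := key.2 h
    omega

end LenEq2

section Perms
set_option linter.unreachableTactic false
set_option linter.unusedTactic false

lemma r_app : ∀ (i : ℕ), 1 ≤ i → ∀ (x : ℤ),
    r i x = if x = 1 then -(i:ℤ) else if 2 ≤ x ∧ x ≤ (i:ℤ) then x - 1
      else if x = -1 then (i:ℤ) else if -(i:ℤ) ≤ x ∧ x ≤ -2 then x + 1 else x := by
  intro i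
  induction i with
  | zero => omega
  | succ k ih =>
    intro _ x
    by_cases hk : 1 ≤ k
    · have hr : r (k+1) = s k * r k := by
        cases k with
        | zero => omega
        | succ m => rfl
      rw [hr, Equiv.Perm.mul_apply, ih hk x, s_app k hk]
      push_cast
      split_ifs <;> omega
    · have hk0 : k = 0 := by omega
      subst hk0
      have : r 1 = t := rfl
      rw [this, t_app]
      push_cast
      split_ifs <;> omega

lemma a_app : ∀ (l : ℕ) (x : ℤ),
    a l x = if 1 ≤ x ∧ x ≤ (l:ℤ) then x - ((l:ℤ)+1)
      else if -(l:ℤ) ≤ x ∧ x ≤ -1 then x + ((l:ℤ)+1) else x := by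
  intro l
  induction l with
  | zero =>
    intro x
    show (1 : Equiv.Perm ℤ) x = _
    rw [Equiv.Perm.one_apply]
    push_cast
    split_ifs <;> omega
  | succ k ih =>
    intro x
    show (a k * r (k+1)) x = _
    rw [Equiv.Perm.mul_apply, r_app (k+1) (by omega) x, ih]
    push_cast
    split_ifs <;> omega

lemma sigmaI_app (i j : ℕ) (x : ℤ) :
    sigmaI i j x = if 1 ≤ (i:ℤ) ∧ (i:ℤ) ≤ x ∧ x ≤ (j:ℤ) then (i:ℤ) + (j:ℤ) - x
      else if 1 ≤ (i:ℤ) ∧ -(j:ℤ) ≤ x ∧ x ≤ -(i:ℤ) then -((i:ℤ) + (j:ℤ)) - x else x := rfl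

lemma r_mem_W {n : ℕ} : ∀ i : ℕ, i ≤ n → r i ∈ W n := by
  intro i
  induction i with
  | zero => intro _; exact (W n).one_mem
  | succ k ih =>
    intro hk
    by_cases hk1 : 1 ≤ k
    · have hr : r (k+1) = s k * r k := by
        cases k with
        | zero => omega
        | succ m => rfl
      rw [hr]
      exact (W n).mul_mem (s_mem_W hk1 (by omega)) (ih (by omega))
    · have : k = 0 := by omega
      subst this
      exact t_mem_W (by omega)

lemma a_mem_W {n : ℕ} : ∀ l : ℕ, l ≤ n → a l ∈ W n := by
  intro l
  induction l with
  | zero => intro _; exact (W n).one_mem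
  | succ k ih =>
    intro hk
    show a k * r (k+1) ∈ W n
    exact (W n).mul_mem (ih (by omega)) (r_mem_W (k+1) hk)

lemma sigmaI_mem_W {n i j : ℕ} (hij : j ≤ n) : sigmaI i j ∈ W n := by
  refine mem_W_iff.2 ⟨fun x => ?_, fun x hx => ?_⟩
  · rw [sigmaI_app, sigmaI_app]
    have : (j:ℤ) ≤ n := by exact_mod_cast hij
    split_ifs <;> omega
  · rw [lt_abs] at hx
    have : (j:ℤ) ≤ n := by exact_mod_cast hij
    rw [sigmaI_app]
    split_ifs <;> omega

lemma cElt_mem_W {n : ℕ} (hn : 1 ≤ n) (K : Finset ℕ) (hK : ∀ i ∈ K, 1 ≤ i ∧ i < n) :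
    cElt K ∈ W n := by
  rw [cElt]
  apply Subgroup.list_prod_mem
  intro x hx
  rw [List.mem_map] at hx
  obtain ⟨i, hi, rfl⟩ := hx
  rw [Finset.mem_sort] at hi
  exact s_mem_W (hK i hi).1 (hK i hi).2

/-- Applying a product of `s`'s with all indices above a small positive value fixes it. -/
lemma prod_s_fixed : ∀ (L : List ℕ), (∀ i ∈ L, 1 ≤ i) → ∀ v : ℤ, 1 ≤ v →
    (∀ i ∈ L, v < (i:ℤ)) → (L.map s).prod v = v := by
  intro L
  induction L with
  | nil => intro _ v _ _; simp
  | cons j L ih =>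
    intro hL v hv hlt
    have hj : 1 ≤ j := hL j (by simp)
    rw [List.map_cons, List.prod_cons, Equiv.Perm.mul_apply,
      ih (fun i hi => hL i (by simp [hi])) v hv (fun i hi => hlt i (by simp [hi])),
      s_app j hj]
    have := hlt j (by simp)
    split_ifs <;> omega

/-- Sorted product of `s`'s over a set containing `[b, e-1]` but not `e` sends `e` to `b`. -/
lemma prod_s_desc : ∀ (L : List ℕ) (b e : ℕ), 1 ≤ b → b ≤ e →
    L.Pairwise (· < ·) → (∀ i ∈ L, b ≤ i) →
    (∀ i : ℕ, b ≤ i → i < e → i ∈ L) → e ∉ L →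
    (L.map s).prod (e : ℤ) = (b : ℤ) := by
  intro L
  induction L with
  | nil =>
    intro b e hb hbe _ _ hfull _
    have : e = b := by
      by_contra h
      exact absurd (hfull b (le_refl b) (by omega)) (by simp)
    simp [this]
  | cons j L ih =>
    intro b e hb hbe hsort hmem hfull hnotin
    have hj : b ≤ j := hmem j (by simp)
    have hj1 : 1 ≤ j := by omega
    have hLgt : ∀ i ∈ L, j < i := fun i hi => (List.pairwise_cons.1 hsort).1 i hi
    by_cases hbe' : b = e
    · -- all elements exceed e = b, so e is fixed
      subst hbe'
      have hjb : j ≠ b := fun hh => hnotin (by simp [hh])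
      apply prod_s_fixed
      · intro m hm
        rcases List.mem_cons.1 hm with h | h
        · omega
        · have := hLgt m h; omega
      · exact_mod_cast Nat.one_le_cast.2 hb
      · intro m hm
        rcases List.mem_cons.1 hm with h | h
        · subst h; exact_mod_cast by omega
        · have h1 := hLgt m h
          have : (m:ℤ) > (j:ℤ) := by exact_mod_cast h1
          have hbj : (b:ℤ) ≤ (j:ℤ) := by exact_mod_cast hj
          omega
    · -- b < e, so b ∈ L and the head must be b
      have hbL : b ∈ j :: L := hfull b (le_refl b) (by omega)
      have hjb : j = b := by
        rcases List.mem_cons.1 hbL with h | h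
        · omega
        · have := hLgt b h; omega
      subst hjb
      rw [List.map_cons, List.prod_cons, Equiv.Perm.mul_apply]
      have htail : (L.map s).prod (e:ℤ) = ((j+1 : ℕ) : ℤ) := by
        apply ih (j+1) e (by omega) (by omega) (List.pairwise_cons.1 hsort).2
        · intro i hi; have := hLgt i hi; omega
        · intro i hi1 hi2
          rcases List.mem_cons.1 (hfull i (by omega) hi2) with h | h
          · omega
          · exact h
        · intro h; exact hnotin (List.mem_cons_of_mem _ h)
      rw [htail, s_app j (by omega)]
      push_cast
      split_ifs <;> omega

lemma cElt_desc (K : Finset ℕ) (b e : ℕ) (hb : 1 ≤ b) (hbe : b ≤ e)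
    (hmem : ∀ i ∈ K, b ≤ i) (hfull : ∀ i : ℕ, b ≤ i → i < e → i ∈ K) (he : e ∉ K) :
    cElt K ((e:ℕ) : ℤ) = (b : ℤ) := by
  rw [cElt]
  apply prod_s_desc (K.sort (· ≤ ·)) b e hb hbe (Finset.sortedLT_sort K).pairwise
  · intro i hi; exact hmem i ((Finset.mem_sort _).1 hi)
  · intro i h1 h2; exact (Finset.mem_sort _).2 (hfull i h1 h2)
  · intro h; exact he ((Finset.mem_sort _).1 h)

lemma cElt_fixed (K : Finset ℕ) (hK : ∀ i ∈ K, 1 ≤ i) (v : ℤ) (hv : 1 ≤ v)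
    (hlt : ∀ i ∈ K, v < (i:ℤ)) : cElt K v = v := by
  rw [cElt]
  apply prod_s_fixed
  · intro i hi; exact hK i ((Finset.mem_sort _).1 hi)
  · exact hv
  · intro i hi; exact hlt i ((Finset.mem_sort _).1 hi)

end Perms

set_option linter.unreachableTactic false
set_option linter.unusedTactic false
set_option maxHeartbeats 1000000

theorem stmt12' (n l : ℕ) (hl1 : 1 ≤ l) (hl2 : l + 1 ≤ n)
    (I : Finset ℕ) (hI : I ⊆ Finset.Icc 1 (n - 1))
    (αI : Equiv.Perm ℤ)
    (hα : αI = cElt (I ∩ Finset.Icc 1 (l - 1)) * cElt (Finset.Icc l (n - 1) \ I) *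
      sigmaI l n * a l) :
    (len n αI < len n (t * αI) ↔ Finset.Icc 1 (l - 1) ⊂ I) ∧
    (0 < αI⁻¹ (1 : ℤ) ↔ Finset.Icc 1 (l - 1) ⊂ I) := by
  classical
  have hn1 : 1 ≤ n := by omega
  set K₁ := I ∩ Finset.Icc 1 (l - 1) with hK₁def
  set K₂ := Finset.Icc l (n - 1) \ I with hK₂def
  have hK₁ : ∀ i ∈ K₁, 1 ≤ i ∧ i ≤ l - 1 := by
    intro i hi
    rw [hK₁def, Finset.mem_inter, Finset.mem_Icc] at hi
    exact hi.2
  have hK₂ : ∀ i ∈ K₂, l ≤ i ∧ i ≤ n - 1 ∧ i ∉ I := by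
    intro i hi
    rw [hK₂def, Finset.mem_sdiff, Finset.mem_Icc] at hi
    exact ⟨hi.1.1, hi.1.2, hi.2⟩
  -- αI ∈ W n
  have hαW : αI ∈ W n := by
    rw [hα]
    refine (W n).mul_mem ((W n).mul_mem ((W n).mul_mem ?_ ?_) ?_) ?_
    · exact cElt_mem_W hn1 K₁ (fun i hi => ⟨(hK₁ i hi).1, by have := (hK₁ i hi).2; omega⟩)
    · exact cElt_mem_W hn1 K₂ (fun i hi => ⟨by have := (hK₂ i hi).1; omega,
        by have := (hK₂ i hi).2.1; omega⟩)
    · exact sigmaI_mem_W le_rfl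
    · exact a_mem_W l (by omega)
  -- the main combinatorial computation
  have happ : ∀ x : ℤ, αI x = cElt K₁ (cElt K₂ (sigmaI l n (a l x))) := by
    intro x
    rw [hα]
    simp only [Equiv.Perm.mul_apply]
  have hmain : 0 < αI⁻¹ (1:ℤ) ↔ Finset.Icc 1 (l - 1) ⊂ I := by
    by_cases hsub : Finset.Icc 1 (l-1) ⊆ I
    · -- [1, l-1] ⊆ I; c₁ l = 1
      have hlK₁ : (l : ℕ) ∉ K₁ := by
        intro h
        have := (hK₁ l h).2
        omega
      have hc₁ : cElt K₁ ((l:ℕ) : ℤ) = ((1:ℕ) : ℤ) :=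
        cElt_desc K₁ 1 l (le_refl 1) hl1 (fun i hi => (hK₁ i hi).1)
          (fun i h1 h2 => by
            rw [hK₁def, Finset.mem_inter, Finset.mem_Icc]
            exact ⟨hsub (Finset.mem_Icc.2 ⟨h1, by omega⟩), h1, by omega⟩)
          hlK₁
      by_cases hex : ∃ j ∈ I, l ≤ j
      · -- proper inclusion case: positive
        obtain ⟨j, hjI, hjl⟩ := hex
        have hjn : j ≤ n - 1 := by
          have := hI hjI
          rw [Finset.mem_Icc] at this
          omega
        have hjK₂ : j ∉ K₂ := by
          intro h
          exact (hK₂ j h).2.2 hjI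
        have hfind : ∃ e : ℕ, l ≤ e ∧ e ∉ K₂ := ⟨j, hjl, hjK₂⟩
        set e₂ := Nat.find hfind with he₂def
        obtain ⟨he₂l, he₂K⟩ := Nat.find_spec hfind
        have he₂j : e₂ ≤ j := Nat.find_min' hfind ⟨hjl, hjK₂⟩
        have he₂full : ∀ m : ℕ, l ≤ m → m < e₂ → m ∈ K₂ := by
          intro m h1 h2
          have := Nat.find_min hfind h2
          push_neg at this
          exact this h1
        have hc₂ : cElt K₂ ((e₂:ℕ) : ℤ) = ((l:ℕ) : ℤ) :=
          cElt_desc K₂ l e₂ hl1 he₂l (fun i hi => (hK₂ i hi).1) he₂full he₂K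
        -- x₀ = l + n - e₂ ∈ [l+1, n]
        have hx₀ : αI ((l:ℤ) + (n:ℤ) - (e₂:ℤ)) = 1 := by
          rw [happ]
          have h1 : a l ((l:ℤ) + (n:ℤ) - (e₂:ℤ)) = (l:ℤ) + (n:ℤ) - (e₂:ℤ) := by
            rw [a_app]
            split_ifs <;> omega
          rw [h1]
          have h2 : sigmaI l n ((l:ℤ) + (n:ℤ) - (e₂:ℤ)) = (e₂:ℤ) := by
            rw [sigmaI_app]
            split_ifs <;> omega
          rw [h2, hc₂, hc₁]
          norm_num
        have hinv : αI⁻¹ (1:ℤ) = (l:ℤ) + (n:ℤ) - (e₂:ℤ) := by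
          rw [← hx₀]
          simp
        have hpos : 0 < αI⁻¹ (1:ℤ) := by rw [hinv]; omega
        have hss : Finset.Icc 1 (l-1) ⊂ I := by
          rw [Finset.ssubset_def]
          refine ⟨hsub, fun hcon => ?_⟩
          have := hcon hjI
          rw [Finset.mem_Icc] at this
          omega
        exact ⟨fun _ => hss, fun _ => hpos⟩
      · -- I = [1, l-1]: negative
        push_neg at hex
        have hnK₂ : (n:ℕ) ∉ K₂ := by
          intro h
          have := (hK₂ n h).2.1
          omega
        have hc₂ : cElt K₂ ((n:ℕ) : ℤ) = ((l:ℕ) : ℤ) :=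
          cElt_desc K₂ l n hl1 (by omega) (fun i hi => (hK₂ i hi).1)
            (fun m h1 h2 => by
              rw [hK₂def, Finset.mem_sdiff, Finset.mem_Icc]
              refine ⟨⟨h1, by omega⟩, fun hm => ?_⟩
              have := hex m hm
              omega)
            hnK₂
        have hx₀ : αI (-1 : ℤ) = 1 := by
          rw [happ]
          have h1 : a l (-1 : ℤ) = (l:ℤ) := by
            rw [a_app]
            split_ifs <;> omega
          rw [h1]
          have h2 : sigmaI l n ((l:ℕ):ℤ) = ((n:ℕ):ℤ) := by
            rw [sigmaI_app]
            split_ifs <;> omega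
          rw [h2, hc₂, hc₁]
          norm_num
        have hinv : αI⁻¹ (1:ℤ) = -1 := by
          rw [Equiv.Perm.inv_eq_iff_eq]
          exact hx₀.symm
        have hnss : ¬ Finset.Icc 1 (l-1) ⊂ I := by
          intro hcon
          rw [Finset.ssubset_def] at hcon
          refine hcon.2 (fun j hj => ?_)
          have hjI := hI hj
          rw [Finset.mem_Icc] at hjI ⊢
          have := hex j hj
          omega
        rw [hinv]
        constructor
        · intro h; omega
        · intro h; exact absurd h hnss
    · -- [1, l-1] ⊄ I: negative
      obtain ⟨e0, he0Icc, he0I⟩ := Finset.not_subset.1 hsub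
      rw [Finset.mem_Icc] at he0Icc
      have he0K₁ : e0 ∉ K₁ := by
        intro h
        rw [hK₁def, Finset.mem_inter] at h
        exact he0I h.1
      have hfind : ∃ e : ℕ, 1 ≤ e ∧ e ∉ K₁ := ⟨e0, he0Icc.1, he0K₁⟩
      set e₁ := Nat.find hfind with he₁def
      obtain ⟨he₁1, he₁K⟩ := Nat.find_spec hfind
      have he₁e0 : e₁ ≤ e0 := Nat.find_min' hfind ⟨he0Icc.1, he0K₁⟩
      have he₁full : ∀ m : ℕ, 1 ≤ m → m < e₁ → m ∈ K₁ := by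
        intro m h1 h2
        have := Nat.find_min hfind h2
        push_neg at this
        exact this h1
      have hc₁ : cElt K₁ ((e₁:ℕ) : ℤ) = ((1:ℕ) : ℤ) :=
        cElt_desc K₁ 1 e₁ (le_refl 1) he₁1 (fun i hi => (hK₁ i hi).1) he₁full he₁K
      have he₁l : e₁ ≤ l - 1 := by omega
      have hx₀ : αI ((e₁:ℤ) - ((l:ℤ)+1)) = 1 := by
        rw [happ]
        have h1 : a l ((e₁:ℤ) - ((l:ℤ)+1)) = (e₁:ℤ) := by
          rw [a_app]
          split_ifs <;> omega
        rw [h1]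
        have h2 : sigmaI l n ((e₁:ℕ):ℤ) = ((e₁:ℕ):ℤ) := by
          rw [sigmaI_app]
          split_ifs <;> omega
        rw [h2]
        have h3 : cElt K₂ ((e₁:ℕ):ℤ) = ((e₁:ℕ):ℤ) :=
          cElt_fixed K₂ (fun i hi => by have := (hK₂ i hi).1; omega) _ (by exact_mod_cast he₁1)
            (fun i hi => by
              have := (hK₂ i hi).1
              have h4 : (l:ℤ) ≤ (i:ℤ) := by exact_mod_cast this
              omega)
        rw [h3, hc₁]
        norm_num
      have hinv : αI⁻¹ (1:ℤ) = (e₁:ℤ) - ((l:ℤ)+1) := by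
        rw [Equiv.Perm.inv_eq_iff_eq]
        exact hx₀.symm
      rw [hinv]
      constructor
      · intro h; omega
      · intro h
        exact absurd h.subset hsub
  refine ⟨?_, hmain⟩
  rw [len_t_mul hn1 hαW]
  exact hmain

/-- for `1 ≤ l ≤ n-1` and `I ⊆ [1,n-1]`, setting
`α(I) = c_{I ∩ [1,l-1]} c_{[l,n-1] ∖ I} σ_{[l,n]} a_l`, one has
`ℓ(t α(I)) > ℓ(α(I))` iff `[1,l-1] ⊊ I`, equivalently `α(I)⁻¹(1) > 0` iff `[1,l-1] ⊊ I`. -/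
theorem stmt12 (n l : ℕ) (hl1 : 1 ≤ l) (hl2 : l + 1 ≤ n)
    (I : Finset ℕ) (hI : I ⊆ Finset.Icc 1 (n - 1))
    (αI : Equiv.Perm ℤ)
    (hα : αI = cElt (I ∩ Finset.Icc 1 (l - 1)) * cElt (Finset.Icc l (n - 1) \ I) *
      sigmaI l n * a l) :
    (len n αI < len n (t * αI) ↔ Finset.Icc 1 (l - 1) ⊂ I) ∧
    (0 < αI⁻¹ (1 : ℤ) ↔ Finset.Icc 1 (l - 1) ⊂ I) :=
  stmt12' n l hl1 hl2 I hI αI hα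

end TypeB
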